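/- arXiv:1909.03897 — 2 statements merged into one kernel-verified Lean document; each statement's English description precedes it below -/
import Mathlib

section
/- Let L be a meet-semilattice with meet ⊓ and let E : L → ℝ be monotone nondecreasing. Define d(u, v) := E(u) + E(v) - 2·E(u ⊓ v). Assume the contraction property: for all u, v, w in L, d(u, v) ≥ d(u ⊓ w, v ⊓ w). Then d satisfies the triangle inequality: d(u, v) ≤ d(u, w) + d(w, v) for all u, v, w in L. -/
theorem energy_dist_triangle {L : Type*} [SemilatticeInf L]
    (E : L → ℝ) (hE : Monotone E)
    (d : L → L → ℝ)
    (hd : ∀ u v, d u v = E u + E v - 2 * E (u ⊓ v))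
    (hcontr : ∀ u v w : L, d (u ⊓ w) (v ⊓ w) ≤ d u v)
    (u v w : L) :
    d u v ≤ d u w + d w v := by
  have h1 := hcontr (u ⊓ w) w v
  rw [hd, hd] at h1
  have e1 : u ⊓ w ⊓ v ⊓ (w ⊓ v) = u ⊓ w ⊓ v := by
    exact inf_eq_left.mpr (inf_le_inf inf_le_right le_rfl)
  have e2 : u ⊓ w ⊓ w = u ⊓ w := by rw [inf_assoc, inf_idem]
  rw [e1, e2] at h1
  have h3 : E (u ⊓ w ⊓ v) ≤ E (u ⊓ v) :=
    hE (inf_le_inf inf_le_left le_rfl)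
  have e3 : v ⊓ w = w ⊓ v := inf_comm v w
  rw [hd u v, hd u w, hd w v]
  linarith [h1, h3]
end

section
/- Let L be a meet-semilattice with meet ⊓ and E : L → ℝ monotone nondecreasing, and define d(u, v) := E(u) + E(v) - 2·E(u ⊓ v). Suppose that L also has binary joins ⊔ and that for all u, v ∈ L: d(u ⊔ v, u) ≥ d(v, u ⊓ v). Then for all u, v, w ∈ L, d(u, v) ≥ d(u ⊓ w, v ⊓ w). -/
theorem energy_dist_contraction_of_max_inequality {L : Type*} [Lattice L]
    (E : L → ℝ) (hE : Monotone E)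
    (d : L → L → ℝ)
    (hd : ∀ u v, d u v = E u + E v - 2 * E (u ⊓ v))
    (hmax : ∀ u v : L, d v (u ⊓ v) ≤ d (u ⊔ v) u)
    (u v w : L) :
    d (u ⊓ w) (v ⊓ w) ≤ d u v := by
  have super : ∀ a b : L, E a + E b ≤ E (a ⊔ b) + E (a ⊓ b) := by
    intro a b
    have h := hmax a b
    rw [hd, hd] at h
    have e1 : b ⊓ (a ⊓ b) = a ⊓ b := inf_eq_right.mpr inf_le_right
    have e2 : (a ⊔ b) ⊓ a = a := inf_eq_right.mpr le_sup_left
    rw [e1, e2] at h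
    linarith
  have key : ∀ a b c : L, E (a ⊓ c) - E (a ⊓ b ⊓ c) ≤ E a - E (a ⊓ b) := by
    intro a b c
    have h := super (a ⊓ c) (a ⊓ b)
    have e1 : (a ⊓ c) ⊓ (a ⊓ b) = a ⊓ b ⊓ c := by
      apply le_antisymm
      · exact le_inf (le_inf (inf_le_left.trans inf_le_left) (inf_le_right.trans inf_le_right))
          (inf_le_left.trans inf_le_right)
      · exact le_inf (le_inf (inf_le_left.trans inf_le_left) inf_le_right)
          (le_inf (inf_le_left.trans inf_le_left) (inf_le_left.trans inf_le_right))
    have e2 : E ((a ⊓ c) ⊔ (a ⊓ b)) ≤ E a := hE (sup_le inf_le_left inf_le_left)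
    rw [e1] at h
    linarith
  have h1 := key u v w
  have h2 := key v u w
  have e3 : v ⊓ u ⊓ w = u ⊓ v ⊓ w := by rw [inf_comm v u]
  have e4 : v ⊓ u = u ⊓ v := inf_comm v u
  rw [e3, e4] at h2
  have e5 : (u ⊓ w) ⊓ (v ⊓ w) = u ⊓ v ⊓ w := by
    rw [inf_assoc, inf_comm w, inf_assoc, inf_idem, ← inf_assoc]
  rw [hd, hd, e5]
  linarith
end
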